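/- With A the quantum complete intersection as below, the set {x^i y^j : 1 ≤ i,j ≤ p−1, and e does not divide i or e does not divide j} is a k-basis of the commutator space [A,A]; in particular dim_k [A,A] = (p−1)² − ((p−1)/e)², and [A,A] is contained in the two-sided ideal A·xy = xy·A. -/

import Mathlib

open Submodule

section QCIaux
variable {k : Type*} [Field k] {q : k} {A : Type*} [Ring A] [Algebra k A] {x y : A}

lemma qci_y_xpow (hyx : y * x = q • (x * y)) (i : ℕ) :
    y * x ^ i = q ^ i • (x ^ i * y) := by
  induction i with
  | zero => simp
  | succ n ih =>
    calc y * x ^ (n+1) = (y * x) * x ^ n := by rw [pow_succ', ← mul_assoc]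
    _ = q • ((x * y) * x ^ n) := by rw [hyx, smul_mul_assoc]
    _ = q • (x * (q ^ n • (x ^ n * y))) := by rw [mul_assoc, ih]
    _ = (q * q ^ n) • (x * (x ^ n * y)) := by rw [mul_smul_comm, smul_smul]
    _ = q ^ (n+1) • (x ^ (n+1) * y) := by rw [← mul_assoc, ← pow_succ' x n, ← pow_succ' q n]

lemma qci_ypow_xpow (hyx : y * x = q • (x * y)) (i j : ℕ) :
    y ^ j * x ^ i = q ^ (i * j) • (x ^ i * y ^ j) := by
  induction j with
  | zero => simp
  | succ n ih =>
    calc y ^ (n+1) * x ^ i = y ^ n * (y * x ^ i) := by rw [pow_succ, mul_assoc]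
    _ = q ^ i • ((y ^ n * x ^ i) * y) := by
        rw [qci_y_xpow hyx, mul_smul_comm, ← mul_assoc]
    _ = q ^ i • ((q ^ (i*n) • (x ^ i * y ^ n)) * y) := by rw [ih]
    _ = (q ^ i * q ^ (i*n)) • (x ^ i * y ^ (n+1)) := by
        rw [smul_mul_assoc, smul_smul, mul_assoc, ← pow_succ]
    _ = q ^ (i*(n+1)) • (x ^ i * y ^ (n+1)) := by rw [← pow_add]; congr 1; ring

lemma qci_mul_mono (hyx : y * x = q • (x * y)) (a c d e : ℕ) :
    (x ^ a * y ^ c) * (x ^ d * y ^ e) = q ^ (d * c) • (x ^ (a+d) * y ^ (c+e)) := by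
  calc (x ^ a * y ^ c) * (x ^ d * y ^ e) = x ^ a * ((y ^ c * x ^ d) * y ^ e) := by
        rw [mul_assoc, mul_assoc]
  _ = x ^ a * ((q ^ (d*c) • (x ^ d * y ^ c)) * y ^ e) := by rw [qci_ypow_xpow hyx]
  _ = q ^ (d*c) • (x ^ (a+d) * y ^ (c+e)) := by
        rw [smul_mul_assoc, mul_smul_comm, pow_add, pow_add, mul_assoc, mul_assoc]

lemma qci_pow_hi {p : ℕ} (hx : x ^ p = 0) {n : ℕ} (hn : p ≤ n) : x ^ n = 0 := by
  rw [← Nat.add_sub_cancel' hn, pow_add, hx, zero_mul]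

end QCIaux

/-- Lemma (the commutator space of the quantum complete intersection): the monomials
`x^i y^j` with `1 ≤ i, j ≤ p−1` and `e ∤ i` or `e ∤ j` form a `k`-basis of `[A,A]`, so
`dim_k [A,A] = (p−1)² − ((p−1)/e)²`; moreover the left ideal `A·xy` coincides with the
right ideal `xy·A` and `[A,A]` is contained in this ideal. -/
theorem commutator_space_of_quantum_complete_intersection
    (k : Type*) [Field k] (p e : ℕ) (q : k)
    (hp : p.Prime) (hodd : Odd p) (hchar : CharP k p)
    (hq : orderOf q = e) (he : 2 ≤ e) (hediv : e ∣ p - 1)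
    (A : Type*) [Ring A] [Algebra k A] (x y : A)
    (hx : x ^ p = 0) (hy : y ^ p = 0) (hyx : y * x = q • (x * y))
    (b : Module.Basis (Fin p × Fin p) k A)
    (hb : ∀ ij : Fin p × Fin p, b ij = x ^ (ij.1 : ℕ) * y ^ (ij.2 : ℕ)) :
    (LinearIndependent k (fun a : ↥{a : A | ∃ i j : ℕ, 1 ≤ i ∧ i ≤ p - 1 ∧ 1 ≤ j ∧
        j ≤ p - 1 ∧ (¬ e ∣ i ∨ ¬ e ∣ j) ∧ a = x ^ i * y ^ j} => (a : A)) ∧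
      Submodule.span k {a : A | ∃ i j : ℕ, 1 ≤ i ∧ i ≤ p - 1 ∧ 1 ≤ j ∧
        j ≤ p - 1 ∧ (¬ e ∣ i ∨ ¬ e ∣ j) ∧ a = x ^ i * y ^ j} =
        Submodule.span k {c : A | ∃ a b : A, c = a * b - b * a} ∧
      Module.finrank k ↥(Submodule.span k {c : A | ∃ a b : A, c = a * b - b * a}) =
        (p - 1) ^ 2 - ((p - 1) / e) ^ 2) ∧
    {c : A | ∃ a : A, c = a * (x * y)} = {c : A | ∃ a : A, c = (x * y) * a} ∧
    ∀ c ∈ Submodule.span k {c : A | ∃ a b : A, c = a * b - b * a},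
      ∃ a : A, c = a * (x * y) := by
  classical
  have hp1 : 1 ≤ p := hp.pos
  set S : Set A := {a : A | ∃ i j : ℕ, 1 ≤ i ∧ i ≤ p - 1 ∧ 1 ≤ j ∧
      j ≤ p - 1 ∧ (¬ e ∣ i ∨ ¬ e ∣ j) ∧ a = x ^ i * y ^ j} with hSdef
  set C : Set A := {c : A | ∃ a b : A, c = a * b - b * a} with hCdef
  have hqe1 : q ^ e = 1 := by rw [← hq]; exact pow_orderOf_eq_one q
  have hq0 : q ≠ 0 := by
    rintro rfl
    rw [zero_pow (by omega)] at hqe1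
    exact zero_ne_one hqe1
  have hqn : ∀ n : ℕ, q ^ n = 1 ↔ e ∣ n := fun n => by
    rw [← hq]; exact orderOf_dvd_iff_pow_eq_one.symm
  have hcom : ∀ a c d f : ℕ, (x^a*y^c)*(x^d*y^f) - (x^d*y^f)*(x^a*y^c)
      = (q^(d*c) - q^(a*f)) • (x^(a+d)*y^(c+f)) := by
    intro a c d f
    rw [qci_mul_mono hyx, qci_mul_mono hyx, Nat.add_comm d a, Nat.add_comm f c, sub_smul]
  -- S is contained in the span of commutators
  have hSsubC : S ⊆ ↑(span k C) := by
    rintro a ⟨i, j, hi1, hi2, hj1, hj2, hij, rfl⟩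
    have hC : ∀ u v : A, u*v - v*u ∈ span k C := fun u v => subset_span ⟨u, v, rfl⟩
    rcases hij with hei | hej
    · have h := hcom 0 1 i (j - 1)
      rw [Nat.mul_one, Nat.zero_mul, pow_zero, Nat.zero_add, Nat.add_sub_cancel' hj1] at h
      have h1 : y * (x ^ i * y ^ (j-1)) - (x ^ i * y ^ (j-1)) * y
          = (q ^ i - 1) • (x ^ i * y ^ j) := by simpa using h
      have hne : q ^ i - 1 ≠ 0 := sub_ne_zero.mpr (fun hh => hei ((hqn i).mp hh))
      have h2 : x ^ i * y ^ j = (q ^ i - 1)⁻¹ •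
          (y * (x ^ i * y ^ (j-1)) - (x ^ i * y ^ (j-1)) * y) := by
        rw [h1, smul_smul, inv_mul_cancel₀ hne, one_smul]
      rw [h2]
      exact Submodule.smul_mem _ _ (hC _ _)
    · have h := hcom 1 0 (i - 1) j
      rw [Nat.mul_zero, pow_zero, Nat.one_mul, Nat.add_sub_cancel' hi1, Nat.zero_add] at h
      have h1 : x * (x ^ (i-1) * y ^ j) - (x ^ (i-1) * y ^ j) * x
          = (1 - q ^ j) • (x ^ i * y ^ j) := by simpa using h
      have hne : 1 - q ^ j ≠ 0 := sub_ne_zero.mpr (fun hh => hej ((hqn j).mp hh.symm))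
      have h2 : x ^ i * y ^ j = (1 - q ^ j)⁻¹ •
          (x * (x ^ (i-1) * y ^ j) - (x ^ (i-1) * y ^ j) * x) := by
        rw [h1, smul_smul, inv_mul_cancel₀ hne, one_smul]
      rw [h2]
      exact Submodule.smul_mem _ _ (hC _ _)
  -- monomial commutators lie in the span of S
  have hmono : ∀ a c d f : ℕ,
      (x^a*y^c)*(x^d*y^f) - (x^d*y^f)*(x^a*y^c) ∈ span k S := by
    intro a c d f
    rw [hcom]
    by_cases h1 : p ≤ a + d
    · rw [qci_pow_hi hx h1, zero_mul, smul_zero]; exact zero_mem _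
    by_cases h2 : p ≤ c + f
    · rw [qci_pow_hi hy h2, mul_zero, smul_zero]; exact zero_mem _
    by_cases h3 : a + d = 0
    · obtain ⟨ha, hd⟩ : a = 0 ∧ d = 0 := by omega
      subst ha; subst hd; simp
    by_cases h4 : c + f = 0
    · obtain ⟨hc, hf⟩ : c = 0 ∧ f = 0 := by omega
      subst hc; subst hf; simp
    by_cases h5 : e ∣ (a + d) ∧ e ∣ (c + f)
    · have e1 : q^(d*c) * q^(a*c) = 1 := by
        rw [← pow_add]
        apply (hqn _).mpr
        have hh : d*c + a*c = (a+d)*c := by ring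
        rw [hh]; exact h5.1.mul_right c
      have e2 : q^(a*f) * q^(a*c) = 1 := by
        rw [← pow_add]
        apply (hqn _).mpr
        have hh : a*f + a*c = a*(c+f) := by ring
        rw [hh]; exact h5.2.mul_left a
      have e3 : q^(d*c) = q^(a*f) :=
        mul_right_cancel₀ (pow_ne_zero _ hq0) (e1.trans e2.symm)
      rw [e3, sub_self, zero_smul]; exact zero_mem _
    · refine Submodule.smul_mem _ _ (subset_span ?_)
      exact ⟨a+d, c+f, by omega, by omega, by omega, by omega, by tauto, rfl⟩
  -- commutators lie in the span of S
  have key : ∀ u v : A, u * v - v * u ∈ span k S := by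
    have step1 : ∀ (ij : Fin p × Fin p) (u : A), u * b ij - b ij * u ∈ span k S := by
      intro ij u
      set f := LinearMap.mulRight k (b ij) - LinearMap.mulLeft k (b ij) with hfdef
      have htop : (⊤ : Submodule k A) ≤ (span k S).comap f := by
        rw [← b.span_eq, Submodule.span_le]
        rintro _ ⟨kl, rfl⟩
        simp only [Submodule.mem_comap, hfdef, LinearMap.sub_apply,
          LinearMap.mulRight_apply, LinearMap.mulLeft_apply, Set.mem_setOf_eq]
        rw [hb, hb]
        exact hmono _ _ _ _
      have := htop (Submodule.mem_top (x := u))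
      simpa [hfdef] using this
    intro u v
    set f := LinearMap.mulLeft k u - LinearMap.mulRight k u with hfdef
    have htop : (⊤ : Submodule k A) ≤ (span k S).comap f := by
      rw [← b.span_eq, Submodule.span_le]
      rintro _ ⟨kl, rfl⟩
      simp only [Submodule.mem_comap, hfdef, LinearMap.sub_apply,
        LinearMap.mulRight_apply, LinearMap.mulLeft_apply, Set.mem_setOf_eq]
      exact step1 kl u
    have := htop (Submodule.mem_top (x := v))
    simpa [hfdef] using this
  have hspan_eq : span k S = span k C :=
    le_antisymm (span_le.mpr hSsubC)
      (span_le.mpr (by rintro c ⟨u, v, rfl⟩; exact key u v))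
  -- linear independence
  have hSsubB : S ⊆ Set.range ⇑b := by
    rintro a ⟨i, j, hi1, hi2, hj1, hj2, -, rfl⟩
    exact ⟨(⟨i, by omega⟩, ⟨j, by omega⟩), by rw [hb]⟩
  have hli : LinearIndependent k (fun a : ↥S => (a : A)) :=
    ((linearIndepOn_id_range_iff b.injective).mpr b.linearIndependent).mono hSsubB
  -- finrank
  set T : Finset (Fin p × Fin p) := Finset.univ.filter
    (fun ij => 1 ≤ (ij.1 : ℕ) ∧ 1 ≤ (ij.2 : ℕ) ∧ (¬ e ∣ (ij.1:ℕ) ∨ ¬ e ∣ (ij.2:ℕ))) with hTdef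
  have hSF : S = ↑(T.image ⇑b) := by
    ext a
    simp only [Finset.coe_image, Set.mem_image, Finset.mem_coe, Finset.mem_filter,
      Finset.mem_univ, true_and, hTdef, hSdef, Set.mem_setOf_eq]
    constructor
    · rintro ⟨i, j, hi1, hi2, hj1, hj2, hij, rfl⟩
      exact ⟨(⟨i, by omega⟩, ⟨j, by omega⟩), ⟨hi1, hj1, hij⟩, by rw [hb]⟩
    · rintro ⟨ij, ⟨h1, h2, h3⟩, rfl⟩
      have hi := ij.1.isLt
      have hj := ij.2.isLt
      exact ⟨ij.1, ij.2, h1, by omega, h2, by omega, h3, (hb ij)⟩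
  set T1 : Finset (Fin p) := Finset.univ.filter (fun i => 1 ≤ (i:ℕ)) with hT1def
  set T2 : Finset (Fin p) := Finset.univ.filter (fun i => 1 ≤ (i:ℕ) ∧ e ∣ (i:ℕ)) with hT2def
  have hepos : 0 < e := by omega
  have hT : T = (T1 ×ˢ T1) \ (T2 ×ˢ T2) := by
    ext ij
    simp only [hTdef, hT1def, hT2def, Finset.mem_filter, Finset.mem_univ, true_and,
      Finset.mem_sdiff, Finset.mem_product]
    tauto
  have hT1 : T1.card = p - 1 := by
    have h0 : T1 = Finset.univ \ {(⟨0, hp.pos⟩ : Fin p)} := by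
      ext i
      simp only [hT1def, Finset.mem_filter, Finset.mem_univ, true_and, Finset.mem_sdiff,
        Finset.mem_singleton, Fin.ext_iff]
      omega
    rw [h0, Finset.card_sdiff_of_subset (by simp), Finset.card_univ, Fintype.card_fin,
      Finset.card_singleton]
  have hT2 : T2.card = (p - 1) / e := by
    have hkey : ∀ m : ℕ, m ∈ Finset.range ((p-1)/e) → e*(m+1) < p := by
      intro m hm
      rw [Finset.mem_range] at hm
      have h1 : e*(m+1) ≤ e*((p-1)/e) := Nat.mul_le_mul_left e (by omega)
      have h2 : e*((p-1)/e) = p - 1 := Nat.mul_div_cancel' hediv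
      omega
    rw [show (p-1)/e = (Finset.range ((p-1)/e)).card from (Finset.card_range _).symm]
    apply Finset.card_bij' (fun (i : Fin p) _ => (i:ℕ)/e - 1)
      (fun m hm => (⟨e*(m+1), hkey m hm⟩ : Fin p))
    case hi =>
      intro i hi
      simp only [hT2def, Finset.mem_filter, Finset.mem_univ, true_and] at hi
      obtain ⟨h1, m', hm'⟩ := hi
      have hiLt := i.isLt
      rw [Finset.mem_range, hm', Nat.mul_div_cancel_left _ hepos]
      have hm'1 : 1 ≤ m' := by
        rcases Nat.eq_zero_or_pos m' with h | h
        · rw [h, Nat.mul_zero] at hm'; omega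
        · exact h
      have hle : m' ≤ (p-1)/e := by
        rw [Nat.le_div_iff_mul_le hepos, Nat.mul_comm]
        omega
      omega
    case hj =>
      intro m hm
      simp only [hT2def, Finset.mem_filter, Finset.mem_univ, true_and]
      exact ⟨Nat.mul_pos (by omega) (Nat.succ_pos m), dvd_mul_right e (m+1)⟩
    case left_inv =>
      intro i hi
      simp only [hT2def, Finset.mem_filter, Finset.mem_univ, true_and] at hi
      obtain ⟨h1, m', hm'⟩ := hi
      apply Fin.ext
      simp only [hm', Nat.mul_div_cancel_left _ hepos]
      have hm'1 : 1 ≤ m' := by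
        rcases Nat.eq_zero_or_pos m' with h | h
        · rw [h, Nat.mul_zero] at hm'; omega
        · exact h
      congr 1
      omega
    case right_inv =>
      intro m hm
      simp only [Nat.mul_div_cancel_left _ hepos]
      omega
  have hsub : T2 ×ˢ T2 ⊆ T1 ×ˢ T1 := by
    intro ij h
    simp only [hT1def, hT2def, Finset.mem_product, Finset.mem_filter, Finset.mem_univ,
      true_and] at h ⊢
    tauto
  have hcardT : T.card = (p - 1) ^ 2 - ((p - 1) / e) ^ 2 := by
    rw [hT, Finset.card_sdiff_of_subset hsub, Finset.card_product, Finset.card_product, hT1, hT2,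
      sq, sq]
  have hrank : Module.finrank k ↥(span k C) = (p-1)^2 - ((p-1)/e)^2 := by
    rw [← hspan_eq, hSF]
    have hsub' : (↑(T.image ⇑b) : Set A) ⊆ Set.range ⇑b := by
      rw [← hSF]; exact hSsubB
    have hli' := ((linearIndepOn_id_range_iff b.injective).mpr b.linearIndependent).mono hsub'
    rw [finrank_span_set_eq_card hli', Finset.toFinset_coe,
      Finset.card_image_of_injective T b.injective, hcardT]
  -- the two-sided ideal
  have hxy1 : x * y = x ^ 1 * y ^ 1 := by rw [pow_one, pow_one]
  set Φ : A →ₗ[k] A := b.constr k (fun ij => (q ^ (ij.2:ℕ) * (q ^ (ij.1:ℕ))⁻¹) • b ij)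
    with hPhidef
  have hΦ : ∀ a : A, a * (x * y) = (x * y) * Φ a := by
    have heq : LinearMap.mulRight k (x*y) = (LinearMap.mulLeft k (x*y)).comp Φ := by
      apply b.ext
      intro ij
      simp only [LinearMap.mulRight_apply, LinearMap.coe_comp, Function.comp_apply,
        LinearMap.mulLeft_apply, hPhidef, Module.Basis.constr_basis]
      rw [hb ij, hxy1, qci_mul_mono hyx, mul_smul_comm, qci_mul_mono hyx, smul_smul,
        Nat.one_mul, Nat.mul_one, Nat.add_comm 1 (ij.1:ℕ), Nat.add_comm 1 (ij.2:ℕ)]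
      congr 1
      field_simp
    intro a
    have h := LinearMap.congr_fun heq a
    simp only [LinearMap.mulRight_apply, LinearMap.coe_comp, Function.comp_apply,
      LinearMap.mulLeft_apply] at h
    exact h
  set Ψ : A →ₗ[k] A := b.constr k (fun ij => (q ^ (ij.1:ℕ) * (q ^ (ij.2:ℕ))⁻¹) • b ij)
    with hPsidef
  have hΨ : ∀ a : A, (x * y) * a = Ψ a * (x * y) := by
    have heq : LinearMap.mulLeft k (x*y) = (LinearMap.mulRight k (x*y)).comp Ψ := by
      apply b.ext
      intro ij
      simp only [LinearMap.mulRight_apply, LinearMap.coe_comp, Function.comp_apply,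
        LinearMap.mulLeft_apply, hPsidef, Module.Basis.constr_basis]
      rw [hb ij, hxy1, qci_mul_mono hyx, smul_mul_assoc, qci_mul_mono hyx, smul_smul,
        Nat.one_mul, Nat.mul_one, Nat.add_comm 1 (ij.1:ℕ), Nat.add_comm 1 (ij.2:ℕ)]
      congr 1
      field_simp
    intro a
    have h := LinearMap.congr_fun heq a
    simp only [LinearMap.mulRight_apply, LinearMap.coe_comp, Function.comp_apply,
      LinearMap.mulLeft_apply] at h
    exact h
  have hideal : {c : A | ∃ a : A, c = a * (x * y)} = {c : A | ∃ a : A, c = (x * y) * a} := by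
    ext c
    constructor
    · rintro ⟨a, rfl⟩; exact ⟨Φ a, hΦ a⟩
    · rintro ⟨a, rfl⟩; exact ⟨Ψ a, hΨ a⟩
  have hfin : ∀ c ∈ span k C, ∃ a : A, c = a * (x * y) := by
    intro c hc
    rw [← hspan_eq] at hc
    have hle : span k S ≤ LinearMap.range (LinearMap.mulRight k (x*y)) := by
      rw [Submodule.span_le]
      rintro a ⟨i, j, hi1, hi2, hj1, hj2, -, rfl⟩
      refine ⟨(q^(j-1))⁻¹ • (x^(i-1) * y^(j-1)), ?_⟩
      rw [LinearMap.mulRight_apply, smul_mul_assoc, hxy1, qci_mul_mono hyx, Nat.one_mul,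
        smul_smul, inv_mul_cancel₀ (pow_ne_zero _ hq0), one_smul,
        Nat.sub_add_cancel hi1, Nat.sub_add_cancel hj1]
    obtain ⟨a, ha⟩ := hle hc
    exact ⟨a, by rw [← ha, LinearMap.mulRight_apply]⟩
  exact ⟨⟨hli, hspan_eq, hrank⟩, hideal, hfin⟩
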